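/- Let (Ω, 𝔄) be a measurable space, μ a probability measure on Ω, a : Ω → ℝ a nonnegative integrable function, b ≥ 0 a real number, and p ∈ (0,1). Assume Z := p·∫ a dμ + (1−p)·b > 0, and let ν be the probability measure on Ω × Bool determined by ν(A × {true}) = Z⁻¹ · p · ∫_A a dμ and ν(A × {false}) = Z⁻¹ · (1−p) · b · μ(A) for measurable A. If ν equals the product of its two marginal measures, then either b = 0 or a is μ-almost everywhere equal to the constant ∫ a dμ. -/

import Mathlib

open MeasureTheory

/-- Single-word core of Theorem 1's proof: if the posterior joint distribution
of the latent variable `ω` and a single Bernoulli channel switch factors as the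
product of its marginals, then either the irrelevant-channel probability `b`
vanishes or the relevant-channel likelihood `a` is `μ`-a.e. constant (equal to
its mean). -/
theorem pfslda_single_switch_independence
    {Ω : Type*} [MeasurableSpace Ω]
    (μ : Measure Ω) [IsProbabilityMeasure μ]
    (a : Ω → ℝ) (ha_nn : ∀ ω, 0 ≤ a ω) (ha_int : Integrable a μ)
    (b : ℝ) (hb : 0 ≤ b)
    (p : ℝ) (hp : p ∈ Set.Ioo (0 : ℝ) 1)
    (Z : ℝ) (hZ : Z = p * ∫ ω, a ω ∂μ + (1 - p) * b) (hZpos : 0 < Z)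
    (ν : Measure (Ω × Bool)) [IsProbabilityMeasure ν]
    (hν_true : ∀ A : Set Ω, MeasurableSet A →
      ν (A ×ˢ ({true} : Set Bool)) = ENNReal.ofReal (Z⁻¹ * p * ∫ ω in A, a ω ∂μ))
    (hν_false : ∀ A : Set Ω, MeasurableSet A →
      ν (A ×ˢ ({false} : Set Bool)) = ENNReal.ofReal (Z⁻¹ * (1 - p) * b) * μ A)
    (hindep : ν = ν.fst.prod ν.snd) :
    b = 0 ∨ a =ᵐ[μ] fun _ => ∫ ω, a ω ∂μ := by
  by_cases hb0 : b = 0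
  · exact Or.inl hb0
  right
  have hbpos : 0 < b := lt_of_le_of_ne hb (Ne.symm hb0)
  obtain ⟨hp0, hp1⟩ := hp
  set I : ℝ := ∫ ω, a ω ∂μ with hI
  have hInn : 0 ≤ I := integral_nonneg ha_nn
  set r : ℝ := Z⁻¹ * p with hr
  set s : ℝ := Z⁻¹ * (1 - p) * b with hs
  have hrpos : 0 < r := mul_pos (inv_pos.mpr hZpos) hp0
  have hspos : 0 < s := mul_pos (mul_pos (inv_pos.mpr hZpos) (by linarith)) hbpos
  -- second marginal of {true}
  have hsnd : ν.snd ({true} : Set Bool) = ENNReal.ofReal (r * I) := by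
    rw [Measure.snd_apply (measurableSet_singleton true)]
    have hset : Prod.snd ⁻¹' ({true} : Set Bool)
        = (Set.univ ×ˢ ({true} : Set Bool) : Set (Ω × Bool)) := by
      ext ⟨ω, c⟩; simp
    rw [hset, hν_true Set.univ MeasurableSet.univ, setIntegral_univ]
  -- first marginal
  have hfst : ∀ A : Set Ω, MeasurableSet A →
      ν.fst A = ENNReal.ofReal (r * ∫ ω in A, a ω ∂μ) + ENNReal.ofReal s * μ A := by
    intro A hA
    rw [Measure.fst_apply hA]
    have hset : Prod.fst ⁻¹' A
        = (A ×ˢ ({true} : Set Bool)) ∪ (A ×ˢ ({false} : Set Bool)) := by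
      ext ⟨ω, c⟩; cases c <;> simp
    rw [hset, measure_union (by simp [Set.disjoint_left])
        (hA.prod (measurableSet_singleton false)),
      hν_true A hA, hν_false A hA]
  -- the key real equation on each measurable set
  have key : ∀ A : Set Ω, MeasurableSet A →
      r * ∫ ω in A, a ω ∂μ
        = (r * ∫ ω in A, a ω ∂μ + s * (μ A).toReal) * (r * I) := by
    intro A hA
    have hJnn : 0 ≤ ∫ ω in A, a ω ∂μ := setIntegral_nonneg hA fun ω _ => ha_nn ω
    have hmA : μ A ≠ ⊤ := (measure_lt_top μ A).ne
    have hEq : ν (A ×ˢ ({true} : Set Bool))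
        = (ν.fst.prod ν.snd) (A ×ˢ ({true} : Set Bool)) := by rw [← hindep]
    rw [Measure.prod_prod, hν_true A hA, hfst A hA, hsnd] at hEq
    have hμA : ENNReal.ofReal s * μ A = ENNReal.ofReal (s * (μ A).toReal) := by
      rw [ENNReal.ofReal_mul hspos.le, ENNReal.ofReal_toReal hmA]
    rw [hμA, ← ENNReal.ofReal_add (by positivity) (by positivity),
      ← ENNReal.ofReal_mul (by positivity)] at hEq
    exact (ENNReal.ofReal_eq_ofReal_iff (by positivity) (by positivity)).mp hEq
  -- deduce ∫_A a = I * μ(A).toReal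
  have hconst : ∀ A : Set Ω, MeasurableSet A →
      ∫ ω in A, a ω ∂μ = (μ A).toReal * I := by
    intro A hA
    have h := key A hA
    set J : ℝ := ∫ ω in A, a ω ∂μ
    set m : ℝ := (μ A).toReal
    -- 1 - r*I = s
    have hone : 1 - r * I = s := by
      have hZne : Z ≠ 0 := hZpos.ne'
      rw [hr, hs]
      linear_combination Z⁻¹ * hZ - mul_inv_cancel₀ hZne
    -- h : r*J = (r*J + s*m) * (r*I)
    have h2 : s * (r * J) = s * (m * (r * I)) := by
      linear_combination h - (r * J) * hone
    have h3 : r * J = r * (m * I) := by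
      linear_combination mul_left_cancel₀ hspos.ne' h2
    exact mul_left_cancel₀ hrpos.ne' h3
  refine Integrable.ae_eq_of_forall_setIntegral_eq a (fun _ => I) ha_int
    (integrable_const I) (fun A hA _ => ?_)
  rw [hconst A hA, setIntegral_const, smul_eq_mul]
  rfl
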